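/- Suppose each g_k is convex and differentiable with L_k-Lipschitz gradient, and the dual variables satisfy y_k = −∇g_k(w_k) for some points w_k ∈ E. Then for any points x⁺ ∈ E and x_k⁺ ∈ E (k = 1,…,K): L({x_k⁺}, x⁺; y) ≥ f(x⁺) + Σ_{k=1}^K [ ((ρ_k − L_k)/2)‖x_k⁺ − x⁺‖² − (L_k/2)‖w_k − x⁺‖² ], where f(x) := Σ_{k=1}^K g_k(x) + h(x). -/

import Mathlib

open RealInnerProductSpace

section Aux
variable {E : Type*} [NormedAddCommGroup E] [InnerProductSpace ℝ E] [CompleteSpace E]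

lemma line_hasDerivAt (f : E → ℝ) (hf : Differentiable ℝ f) (x v : E) (t : ℝ) :
    HasDerivAt (fun s : ℝ => f (x + s • v)) ⟪gradient f (x + t • v), v⟫ t := by
  have hα : HasDerivAt (fun s : ℝ => x + s • v) v t := by
    simpa using ((hasDerivAt_id t).smul_const v).const_add x
  have hg : HasGradientAt f (gradient f (x + t • v)) (x + t • v) :=
    (hf _).hasGradientAt
  have hF : HasFDerivAt f
      (InnerProductSpace.toDual ℝ E (gradient f (x + t • v)) : E →L[ℝ] ℝ) (x + t • v) := hg
  simpa [Function.comp_def] using hF.comp_hasDerivAt t hα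

lemma convex_grad_le (f : E → ℝ) (hcvx : ConvexOn ℝ Set.univ f)
    (hf : Differentiable ℝ f) (x z : E) :
    f x + ⟪gradient f x, z - x⟫ ≤ f z := by
  set v := z - x with hv
  set φ : ℝ → ℝ := fun s => f (x + s • v) with hφ
  have hφc : ConvexOn ℝ Set.univ φ := by
    have := hcvx.comp_affineMap (AffineMap.lineMap x z : ℝ →ᵃ[ℝ] E)
    have heq : φ = (f ∘ (AffineMap.lineMap x z : ℝ →ᵃ[ℝ] E)) := by
      funext s
      simp [φ, AffineMap.lineMap_apply, hv]
      rw [add_comm]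
    rw [heq]
    simpa using this
  have hd : HasDerivAt φ ⟪gradient f (x + (0:ℝ) • v), v⟫ 0 := line_hasDerivAt f hf x v 0
  have := hφc.le_slope_of_hasDerivAt (Set.mem_univ (0:ℝ)) (Set.mem_univ (1:ℝ)) one_pos hd
  simp [slope, φ] at this
  have hxv : x + v = z := by simp [hv]
  rw [hxv] at this
  rw [inner_gradient_left]
  linarith

lemma descent_lemma (f : E → ℝ) (hf : Differentiable ℝ f) (Lc : ℝ) (hLc : 0 ≤ Lc)
    (hlip : ∀ u v : E, ‖gradient f u - gradient f v‖ ≤ Lc * ‖u - v‖) (x z : E) :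
    f z ≤ f x + ⟪gradient f x, z - x⟫ + Lc / 2 * ‖z - x‖ ^ 2 := by
  set v := z - x with hv
  set ψ : ℝ → ℝ := fun t => f (x + t • v) - t * ⟪gradient f x, v⟫ - Lc / 2 * ‖v‖ ^ 2 * t ^ 2
    with hψ
  have hder : ∀ t : ℝ, HasDerivAt ψ
      (⟪gradient f (x + t • v), v⟫ - ⟪gradient f x, v⟫ - Lc * ‖v‖ ^ 2 * t) t := by
    intro t
    have h1 := line_hasDerivAt f hf x v t
    have h2 : HasDerivAt (fun t : ℝ => t * ⟪gradient f x, v⟫) ⟪gradient f x, v⟫ t := by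
      simpa using (hasDerivAt_id t).mul_const ⟪gradient f x, v⟫
    have h3 : HasDerivAt (fun t : ℝ => Lc / 2 * ‖v‖ ^ 2 * t ^ 2) (Lc / 2 * ‖v‖ ^ 2 * (2 * t)) t := by
      simpa using ((hasDerivAt_pow 2 t).const_mul (Lc / 2 * ‖v‖ ^ 2))
    have := (h1.sub h2).sub h3
    rw [show Lc * ‖v‖ ^ 2 * t = Lc / 2 * ‖v‖ ^ 2 * (2 * t) by ring]
    exact this
  have hmono : AntitoneOn ψ (Set.Icc (0:ℝ) 1) := by
    apply antitoneOn_of_deriv_nonpos (convex_Icc 0 1)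
    · exact Continuous.continuousOn (by
        have : ∀ t, DifferentiableAt ℝ ψ t := fun t => (hder t).differentiableAt
        exact (Differentiable.continuous this))
    · intro t ht
      exact ((hder t).differentiableAt).differentiableWithinAt
    · intro t ht
      rw [interior_Icc] at ht
      rw [(hder t).deriv]
      have hb : ⟪gradient f (x + t • v) - gradient f x, v⟫ ≤ Lc * ‖v‖ ^ 2 * t := by
        calc ⟪gradient f (x + t • v) - gradient f x, v⟫
            ≤ ‖gradient f (x + t • v) - gradient f x‖ * ‖v‖ := real_inner_le_norm _ _
          _ ≤ (Lc * ‖(x + t • v) - x‖) * ‖v‖ :=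
              mul_le_mul_of_nonneg_right (hlip _ _) (norm_nonneg v)
          _ = Lc * ‖v‖ ^ 2 * t := by
              rw [show (x + t • v) - x = t • v by abel, norm_smul]
              simp [abs_of_pos ht.1]
              ring
      rw [inner_sub_left] at hb
      linarith
  have h01 := hmono (Set.mem_Icc.2 ⟨le_refl 0, zero_le_one⟩) (Set.mem_Icc.2 ⟨zero_le_one, le_refl 1⟩) zero_le_one
  have hxv : x + (1:ℝ) • v = z := by simp [hv]
  have hxv' : x + v = z := by simp [hv]
  simp [ψ, hxv'] at h01
  rw [inner_gradient_left]
  linarith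

end Aux

/-- The augmented Lagrangian of the consensus problem. -/
noncomputable def augL {E : Type*} [NormedAddCommGroup E] [InnerProductSpace ℝ E]
    {K : ℕ} (g : Fin K → E → ℝ) (h : E → ℝ) (ρ : Fin K → ℝ)
    (xk : Fin K → E) (x : E) (y : Fin K → E) : ℝ :=
  (∑ k, g k (xk k)) + h x + (∑ k, ⟪y k, xk k - x⟫) + ∑ k, ρ k / 2 * ‖xk k - x‖ ^ 2

/-- Improved lower bound (39) used in the proof of Corollary 3.1(1): when every
`g_k` is convex and the dual variables satisfy `y_k = −∇g_k(w_k)`,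
`L({x_k⁺}, x⁺; y) ≥ f(x⁺) + ∑_k [((ρ_k − L_k)/2)‖x_k⁺ − x⁺‖² − (L_k/2)‖w_k − x⁺‖²]`. -/
theorem stmt_15 {E : Type*} [NormedAddCommGroup E] [InnerProductSpace ℝ E] [CompleteSpace E]
    {K : ℕ} (g : Fin K → E → ℝ) (h : E → ℝ) (L ρ : Fin K → ℝ)
    (hL : ∀ k, 0 < L k) (hρ : ∀ k, 0 < ρ k)
    (hgcvx : ∀ k, ConvexOn ℝ Set.univ (g k))
    (hdiff : ∀ k, Differentiable ℝ (g k))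
    (hlip : ∀ k, ∀ u v : E, ‖gradient (g k) u - gradient (g k) v‖ ≤ L k * ‖u - v‖)
    (hh : ConvexOn ℝ Set.univ h)
    (w : Fin K → E) (y : Fin K → E)
    (hy : ∀ k, y k = -gradient (g k) (w k))
    (xp : E) (xkp : Fin K → E) :
    augL g h ρ xkp xp y
      ≥ ((∑ k, g k xp) + h xp)
        + ∑ k, ((ρ k - L k) / 2 * ‖xkp k - xp‖ ^ 2 - L k / 2 * ‖w k - xp‖ ^ 2) := by
  have key : ∀ k : Fin K,
      g k xp + ((ρ k - L k) / 2 * ‖xkp k - xp‖ ^ 2 - L k / 2 * ‖w k - xp‖ ^ 2)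
        ≤ g k (xkp k) + ⟪y k, xkp k - xp⟫ + ρ k / 2 * ‖xkp k - xp‖ ^ 2 := by
    intro k
    have hcv := convex_grad_le (g k) (hgcvx k) (hdiff k) (w k) (xkp k)
    have hdes := descent_lemma (g k) (hdiff k) (L k) (hL k).le (hlip k) (w k) xp
    have hinner : ⟪y k, xkp k - xp⟫
        = ⟪gradient (g k) (w k), xp - w k⟫ - ⟪gradient (g k) (w k), xkp k - w k⟫ := by
      simp only [hy k, inner_neg_left, inner_sub_right]
      ring
    have hnorm : ‖xp - w k‖ = ‖w k - xp‖ := norm_sub_rev _ _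
    rw [hnorm] at hdes
    have hsq : (0:ℝ) ≤ ‖xkp k - xp‖ ^ 2 := sq_nonneg _
    nlinarith [(hL k).le]
  have hsum := Finset.sum_le_sum (fun k (_ : k ∈ Finset.univ) => key k)
  simp only [Finset.sum_add_distrib, Finset.sum_sub_distrib] at hsum
  simp only [augL, ge_iff_le, Finset.sum_sub_distrib]
  linarith
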